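/- arXiv:2408.10400 — 2 statements merged into one kernel-verified Lean document; each statement's English description precedes it below -/
import Mathlib

section
/- If a function f : [0,1] → ℝ is α-Hölder continuous for some α ∈ (0,1], then the Hausdorff dimension of its graph is at most 2 − α. -/
open MeasureTheory

/-- If `f : [0,1] → ℝ` is `α`-Hölder continuous with `α ∈ (0,1]`, then the
Hausdorff dimension of its graph is at most `2 - α`. -/
theorem dimH_graph_holder_le (f : ℝ → ℝ) (C α : ℝ) (hC : 0 < C)
    (hα0 : 0 < α) (hα1 : α ≤ 1)
    (hf : ∀ x ∈ Set.Icc (0 : ℝ) 1, ∀ y ∈ Set.Icc (0 : ℝ) 1,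
      |f x - f y| ≤ C * |x - y| ^ α) :
    dimH {p : ℝ × ℝ | p.1 ∈ Set.Icc (0 : ℝ) 1 ∧ p.2 = f p.1}
      ≤ ENNReal.ofReal (2 - α) := by
  set s := {p : ℝ × ℝ | p.1 ∈ Set.Icc (0 : ℝ) 1 ∧ p.2 = f p.1} with hs
  have hd0 : (0:ℝ) ≤ 2 - α := by linarith
  set M : ℕ → ℕ := fun n => ⌈2*C*(n:ℝ)*((1:ℝ)/n)^α⌉₊ + 1 with hMdef
  set t : ∀ n : ℕ, Fin n × Fin (M n) → Set (ℝ × ℝ) := fun n p =>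
      Set.Icc ((p.1 : ℕ) / (n:ℝ)) (((p.1 : ℕ) + 1) / (n:ℝ)) ×ˢ
      Set.Icc (f ((p.1 : ℕ) / (n:ℝ)) - C*((1:ℝ)/n)^α + (p.2 : ℕ)/(n:ℝ))
              (f ((p.1 : ℕ) / (n:ℝ)) - C*((1:ℝ)/n)^α + ((p.2 : ℕ)+1)/(n:ℝ)) with htdef
  -- diameters of boxes
  have hdiam : ∀ n : ℕ, ∀ p : Fin n × Fin (M n),
      EMetric.diam (t n p) ≤ ENNReal.ofReal (1/(n:ℝ)) := by
    intro n p
    rcases Nat.eq_zero_or_pos n with rfl | hn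
    · exact p.1.elim0
    have hn' : (0:ℝ) < n := by exact_mod_cast hn
    have key : ∀ a : ℝ, (a+1)/(n:ℝ) - a/(n:ℝ) = 1/(n:ℝ) := fun a => by
      rw [div_sub_div_same]; ring_nf
    apply EMetric.diam_le
    rintro ⟨x₁, y₁⟩ ⟨hx₁, hy₁⟩ ⟨x₂, y₂⟩ ⟨hx₂, hy₂⟩
    rw [Prod.edist_eq]
    simp only [Set.mem_Icc] at hx₁ hy₁ hx₂ hy₂
    apply max_le <;>
    · rw [edist_dist, Real.dist_eq, ENNReal.ofReal_le_ofReal_iff (by positivity), abs_le]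
      constructor <;>
        simp only [Prod.fst, Prod.snd] <;>
        linarith [key ((p.1 : ℕ) : ℝ), key ((p.2 : ℕ) : ℝ), hx₁.1, hx₁.2, hx₂.1, hx₂.2,
          hy₁.1, hy₁.2, hy₂.1, hy₂.2]
  -- covering property
  have hcov : ∀ n : ℕ, 1 ≤ n → s ⊆ ⋃ p : Fin n × Fin (M n), t n p := by
    intro n hn
    have hn' : (0:ℝ) < n := by exact_mod_cast hn
    rintro ⟨x, y⟩ ⟨hx, hy⟩
    simp only [Set.mem_Icc] at hx
    -- horizontal index
    have hnx0 : 0 ≤ (n:ℝ) * x := mul_nonneg hn'.le hx.1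
    set i : ℕ := min ⌊(n:ℝ) * x⌋₊ (n - 1) with hidef
    have hi_lt : i < n := by
      have : n - 1 < n := by omega
      exact lt_of_le_of_lt (min_le_right _ _) this
    have hix1 : (i:ℝ) / n ≤ x := by
      rw [div_le_iff₀ hn']
      have : (i:ℝ) ≤ ⌊(n:ℝ) * x⌋₊ := by exact_mod_cast min_le_left _ _
      calc (i:ℝ) ≤ ⌊(n:ℝ) * x⌋₊ := this
        _ ≤ (n:ℝ) * x := Nat.floor_le hnx0
        _ = x * n := by ring
    have hix2 : x ≤ ((i:ℝ) + 1) / n := by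
      rcases le_or_gt ⌊(n:ℝ) * x⌋₊ (n-1) with h | h
      · have hieq : i = ⌊(n:ℝ) * x⌋₊ := min_eq_left h
        rw [le_div_iff₀ hn']
        have := Nat.lt_floor_add_one ((n:ℝ) * x)
        have hfl := Nat.lt_floor_add_one ((n:ℝ)*x)
        rw [hieq]
        calc x * (n:ℝ) = (n:ℝ) * x := mul_comm _ _
          _ ≤ (⌊(n:ℝ)*x⌋₊ : ℝ) + 1 := hfl.le
      · have hieq : i = n - 1 := min_eq_right (le_of_lt h)
        have : ((i:ℝ) + 1) = n := by
          rw [hieq]; have : (1:ℕ) ≤ n := hn; push_cast [Nat.cast_sub this]; ring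
        rw [this, le_div_iff₀ hn']
        nlinarith [hx.2]
    set xi : ℝ := (i:ℝ) / n with hxidef
    have hxi_mem : xi ∈ Set.Icc (0:ℝ) 1 := by
      constructor
      · positivity
      · rw [hxidef, div_le_one hn']
        have : (i:ℝ) < n := by exact_mod_cast hi_lt
        linarith
    -- Hölder bound
    have h1n : (0:ℝ) ≤ 1/(n:ℝ) := by positivity
    have hixd : ((i:ℝ) + 1)/n - xi = 1/n := by rw [hxidef, div_sub_div_same]; ring_nf
    have hdist : |x - xi| ≤ 1/(n:ℝ) := by
      rw [abs_le]
      exact ⟨by linarith [hix1], by linarith [hix2]⟩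
    have habs0 : (0:ℝ) ≤ |x - xi| := abs_nonneg _
    have hrp : |x - xi| ^ α ≤ ((1:ℝ)/n) ^ α :=
      Real.rpow_le_rpow habs0 hdist (le_of_lt hα0)
    have hfx : |f x - f xi| ≤ C * ((1:ℝ)/n)^α := by
      calc |f x - f xi| ≤ C * |x - xi| ^ α := hf x ⟨hx.1, hx.2⟩ xi hxi_mem
        _ ≤ C * ((1:ℝ)/n)^α := by nlinarith
    -- vertical index
    set v : ℝ := f x - (f xi - C*((1:ℝ)/n)^α) with hvdef
    have hv0 : 0 ≤ v := by
      have := abs_le.1 hfx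
      rw [hvdef]; linarith [this.1]
    have hv2 : v ≤ 2*C*((1:ℝ)/n)^α := by
      have := abs_le.1 hfx
      rw [hvdef]; linarith [this.2]
    have hnv0 : 0 ≤ (n:ℝ) * v := by positivity
    set j : ℕ := min ⌊(n:ℝ) * v⌋₊ (M n - 1) with hjdef
    have hMpos : 1 ≤ M n := by simp only [hMdef]; omega
    have hj_lt : j < M n := lt_of_le_of_lt (min_le_right _ _) (by omega)
    have hjv1 : (j:ℝ) / n ≤ v := by
      rw [div_le_iff₀ hn']
      have : (j:ℝ) ≤ ⌊(n:ℝ) * v⌋₊ := by exact_mod_cast min_le_left _ _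
      calc (j:ℝ) ≤ ⌊(n:ℝ) * v⌋₊ := this
        _ ≤ (n:ℝ) * v := Nat.floor_le hnv0
        _ = v * n := by ring
    have hjv2 : v ≤ ((j:ℝ) + 1) / n := by
      rcases le_or_gt ⌊(n:ℝ) * v⌋₊ (M n - 1) with h | h
      · have hjeq : j = ⌊(n:ℝ) * v⌋₊ := min_eq_left h
        rw [le_div_iff₀ hn']
        have hfl := Nat.lt_floor_add_one ((n:ℝ)*v)
        rw [hjeq]
        calc v * (n:ℝ) = (n:ℝ) * v := mul_comm _ _
          _ ≤ (⌊(n:ℝ)*v⌋₊ : ℝ) + 1 := hfl.le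
      · have hjeq : j = M n - 1 := min_eq_right (le_of_lt h)
        have hMn : ((j:ℝ) + 1) = M n := by
          rw [hjeq]; push_cast [Nat.cast_sub hMpos]; ring
        rw [hMn, le_div_iff₀ hn']
        have hceil : 2*C*(n:ℝ)*((1:ℝ)/n)^α ≤ (M n : ℝ) := by
          rw [hMdef]
          push_cast
          have := Nat.le_ceil (2*C*(n:ℝ)*((1:ℝ)/n)^α)
          linarith
        calc v * n ≤ 2*C*((1:ℝ)/n)^α * n := by nlinarith
          _ = 2*C*(n:ℝ)*((1:ℝ)/n)^α := by ring
          _ ≤ M n := hceil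
    refine Set.mem_iUnion.2 ⟨(⟨i, hi_lt⟩, ⟨j, hj_lt⟩), ?_⟩
    simp only [htdef, Set.mem_prod, Set.mem_Icc, Fin.val_mk]
    have hyx : y = f x := hy
    refine ⟨⟨hix1, hix2⟩, ?_, ?_⟩ <;> rw [hyx]
    · linarith [hjv1]
    · linarith [hjv2]
  -- sum bound
  have hsum : ∀ n : ℕ, 1 ≤ n →
      (∑ p : Fin n × Fin (M n), EMetric.diam (t n p) ^ (2-α)) ≤ ENNReal.ofReal (2*C+2) := by
    intro n hn
    have hn' : (0:ℝ) < n := by exact_mod_cast hn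
    set u : ℝ := 1/(n:ℝ) with hudef
    have hu : 0 < u := by positivity
    have hu1 : u ≤ 1 := by
      rw [hudef, div_le_one hn']; exact_mod_cast hn
    have hnu : (n:ℝ) * u = 1 := by rw [hudef]; field_simp
    have step1 : (∑ p : Fin n × Fin (M n), EMetric.diam (t n p) ^ (2-α)) ≤
        (n * M n : ℕ) * ENNReal.ofReal u ^ (2-α) := by
      calc (∑ p : Fin n × Fin (M n), EMetric.diam (t n p) ^ (2-α))
          ≤ ∑ _p : Fin n × Fin (M n), ENNReal.ofReal u ^ (2-α) :=
            Finset.sum_le_sum fun p _ => ENNReal.rpow_le_rpow (hdiam n p) hd0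
        _ = (n * M n : ℕ) * ENNReal.ofReal u ^ (2-α) := by
            rw [Finset.sum_const, Finset.card_univ, Fintype.card_prod, Fintype.card_fin,
              Fintype.card_fin, nsmul_eq_mul]
    refine step1.trans ?_
    rw [ENNReal.ofReal_rpow_of_pos hu, ← ENNReal.ofReal_natCast,
      ← ENNReal.ofReal_mul (by positivity)]
    apply ENNReal.ofReal_le_ofReal
    -- the real inequality
    have hMle : (M n : ℝ) ≤ 2*C*(n:ℝ)*u^α + 2 := by
      simp only [hMdef]
      push_cast
      have h1 := Nat.ceil_lt_add_one (by positivity : (0:ℝ) ≤ 2*C*(n:ℝ)*u^α)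
      linarith
    have e1 : u ^ α * u ^ (2-α) = u * u := by
      rw [← Real.rpow_add hu, show α + (2-α) = ((2:ℕ):ℝ) by push_cast; ring,
        Real.rpow_natCast]
      ring
    have e2 : (n:ℝ) * u ^ (2-α) = u ^ (1-α) := by
      have hninv : (n:ℝ) = u ^ (-1:ℝ) := by
        rw [Real.rpow_neg_one, hudef]; field_simp
      rw [hninv, ← Real.rpow_add hu, show (-1:ℝ) + (2-α) = 1-α by ring]
    have e3 : u ^ (1-α) ≤ 1 := Real.rpow_le_one hu.le hu1 (by linarith)
    have hup : (0:ℝ) ≤ u ^ (2-α) := Real.rpow_nonneg hu.le _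
    rw [Nat.cast_mul]
    calc (n:ℝ) * (M n : ℝ) * u ^ (2-α)
        ≤ (n:ℝ) * (2*C*(n:ℝ)*u^α + 2) * u ^ (2-α) :=
          mul_le_mul_of_nonneg_right (mul_le_mul_of_nonneg_left hMle hn'.le) hup
      _ = 2*C*((n:ℝ)*(n:ℝ))*(u^α * u^(2-α)) + 2*((n:ℝ)*u^(2-α)) := by ring
      _ = 2*C*(((n:ℝ)*u)*((n:ℝ)*u)) + 2*u^(1-α) := by rw [e1, e2]; ring
      _ = 2*C + 2*u^(1-α) := by rw [hnu]; ring
      _ ≤ 2*C + 2 := by linarith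
  -- measure bound
  have hmeas : μH[2-α] s ≠ ⊤ := by
    have hr : Filter.Tendsto (fun n : ℕ => ENNReal.ofReal (1/(n:ℝ)))
        Filter.atTop (nhds 0) := by
      have := tendsto_one_div_atTop_nhds_zero_nat (𝕜 := ℝ)
      have h2 := ENNReal.tendsto_ofReal this
      simpa using h2
    have hb := MeasureTheory.Measure.hausdorffMeasure_le_liminf_sum (2-α) s
      (fun n : ℕ => ENNReal.ofReal (1/(n:ℝ))) hr t
      (Filter.Eventually.of_forall hdiam)
      ((Filter.eventually_ge_atTop 1).mono hcov)
    have hlim : Filter.liminf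
        (fun n => ∑ p : Fin n × Fin (M n), EMetric.diam (t n p) ^ (2-α))
        Filter.atTop ≤ ENNReal.ofReal (2*C+2) :=
      Filter.liminf_le_of_frequently_le'
        (((Filter.eventually_ge_atTop 1).mono hsum).frequently)
    exact ((hb.trans hlim).trans_lt ENNReal.ofReal_lt_top).ne
  -- conclude
  have := dimH_le_of_hausdorffMeasure_ne_top (X := ℝ × ℝ) (s := s)
    (d := ⟨2-α, hd0⟩) hmeas
  rwa [ENNReal.ofReal_eq_coe_nnreal hd0]
end

section
/- The Weierstrass function W(x) = Σ_{n=0}^∞ a^n cos(b^n π x), with 0 < a < 1, b an odd integer, and ab > 1 + 3π/2, is nowhere differentiable on ℝ. -/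
open Real Filter Topology

private lemma myAbsCosSubCos (u v : ℝ) : |Real.cos u - Real.cos v| ≤ |u - v| := by
  rw [Real.cos_sub_cos]
  have h1 : |Real.sin ((u + v) / 2)| ≤ 1 := Real.abs_sin_le_one _
  have h2 : |Real.sin ((u - v) / 2)| ≤ |(u - v) / 2| := Real.abs_sin_le_abs
  calc |(-2) * Real.sin ((u + v) / 2) * Real.sin ((u - v) / 2)|
      = 2 * |Real.sin ((u + v) / 2)| * |Real.sin ((u - v) / 2)| := by
        rw [abs_mul, abs_mul]; norm_num
    _ ≤ 2 * 1 * |(u - v) / 2| := by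
        apply mul_le_mul _ h2 (abs_nonneg _) (by norm_num)
        exact mul_le_mul_of_nonneg_left h1 (by norm_num)
    _ = |u - v| := by rw [abs_div, abs_two]; ring

private lemma myCosIntPiAdd (j : ℤ) (θ : ℝ) :
    Real.cos ((j : ℝ) * π + θ) = (-1 : ℝ) ^ j * Real.cos θ := by
  have := Real.cos_int_mul_pi_sub (-θ) j
  simpa [sub_neg_eq_add] using this

private lemma myNegOneZpow (c : ℕ) (hc : Odd c) (j : ℤ) :
    ((-1 : ℝ)) ^ ((c : ℤ) * j) = (-1 : ℝ) ^ j := by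
  have h1 : ((-1 : ℝ)) ^ (c : ℤ) = -1 := by
    rw [zpow_natCast, hc.neg_one_pow]
  rw [zpow_mul, h1]

private lemma mySummable {a : ℝ} (ha0 : 0 ≤ a) (ha1 : a < 1) (c : ℕ → ℝ)
    (hc : ∀ n, |c n| ≤ 2) : Summable (fun n => a ^ n * c n) := by
  apply Summable.of_norm_bounded
    ((summable_geometric_of_lt_one ha0 ha1).mul_right 2)
  intro n
  rw [Real.norm_eq_abs, abs_mul, abs_pow, abs_of_nonneg ha0]
  exact mul_le_mul_of_nonneg_left (hc n) (pow_nonneg ha0 n)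

set_option maxHeartbeats 1600000 in
/-- Weierstrass's theorem: `W(x) = Σ aⁿ cos(bⁿ π x)` with `0 < a < 1`, `b` an odd
positive integer, and `a*b > 1 + 3π/2`, is nowhere differentiable. -/
theorem weierstrass_nowhere_differentiable (a : ℝ) (b : ℕ)
    (ha0 : 0 < a) (ha1 : a < 1) (hb : Odd b) (hb1 : 1 < b)
    (hab : 1 + 3 * π / 2 < a * b) :
    ∀ x : ℝ, ¬ DifferentiableAt ℝ
      (fun x : ℝ => ∑' n : ℕ, a ^ n * Real.cos ((b : ℝ) ^ n * π * x)) x := by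
  intro x hdiff
  set W : ℝ → ℝ := fun x : ℝ => ∑' n : ℕ, a ^ n * Real.cos ((b : ℝ) ^ n * π * x) with hW
  have hπ : (0 : ℝ) < π := Real.pi_pos
  have hbR : (1 : ℝ) < (b : ℝ) := by exact_mod_cast hb1
  have hb0 : (0 : ℝ) < (b : ℝ) := by linarith
  have hab1 : (1 : ℝ) < a * b := by nlinarith
  set C : ℝ := 2 / 3 - π / (a * b - 1) with hC
  have hCpos : 0 < C := by
    have h1 : π / (a * b - 1) < 2 / 3 := by
      rw [div_lt_iff₀ (by linarith)]
      nlinarith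
    simp only [hC]; linarith
  have hsum : ∀ t : ℝ, Summable (fun n => a ^ n * Real.cos ((b : ℝ) ^ n * π * t)) := by
    intro t
    apply mySummable ha0.le ha1
    intro n
    calc |Real.cos ((b : ℝ) ^ n * π * t)| ≤ 1 := Real.abs_cos_le_one _
      _ ≤ 2 := by norm_num
  set h : ℕ → ℝ := fun m => (1 - ((b : ℝ) ^ m * x - round ((b : ℝ) ^ m * x))) / (b : ℝ) ^ m
    with hh
  have hBpos : ∀ m : ℕ, (0 : ℝ) < (b : ℝ) ^ m := fun m => pow_pos hb0 m
  have hxm : ∀ m : ℕ, |(b : ℝ) ^ m * x - round ((b : ℝ) ^ m * x)| ≤ 1 / 2 :=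
    fun m => abs_sub_round _
  have hhpos : ∀ m : ℕ, 0 < h m := by
    intro m
    apply div_pos _ (hBpos m)
    have := (abs_le.1 (hxm m)).2
    linarith
  have hhle : ∀ m : ℕ, h m ≤ 3 / 2 / (b : ℝ) ^ m := by
    intro m
    have h2 := (abs_le.1 (hxm m)).1
    rw [hh]
    have hle2 : 1 - ((b : ℝ) ^ m * x - round ((b : ℝ) ^ m * x)) ≤ 3 / 2 := by linarith
    exact div_le_div_of_nonneg_right hle2 (hBpos m).le
  -- the key estimate
  have key : ∀ m : ℕ, C * (a * b) ^ m ≤ |(W (x + h m) - W x) / h m| := by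
    intro m
    set B : ℝ := (b : ℝ) ^ m with hB
    set α : ℤ := round (B * x) with hα
    set t : ℝ := B * x - α with ht
    have htabs : |t| ≤ 1 / 2 := abs_sub_round _
    have hBm : B * h m = 1 - t := by
      rw [hh, ht]
      field_simp
      rw [hα, hB]
    set F : ℕ → ℝ := fun n =>
      a ^ n * (Real.cos ((b : ℝ) ^ n * π * (x + h m)) - Real.cos ((b : ℝ) ^ n * π * x)) with hF
    have hFsum : Summable F := by
      have := (hsum (x + h m)).sub (hsum x)
      simpa [hF, mul_sub] using this
    have hWdiff : W (x + h m) - W x = ∑' n, F n := by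
      rw [hW]
      simp only
      rw [← Summable.tsum_sub (hsum (x + h m)) (hsum x)]
      congr 1
      funext n
      rw [hF]
      ring
    have hsplit : (∑ i ∈ Finset.range m, F i) + ∑' i, F (i + m) = ∑' n, F n :=
      Summable.sum_add_tsum_nat_add m hFsum
    -- head bound
    have hhead : |∑ i ∈ Finset.range m, F i| ≤ π * h m * (a * b) ^ m / (a * b - 1) := by
      calc |∑ i ∈ Finset.range m, F i| ≤ ∑ i ∈ Finset.range m, |F i| :=
            Finset.abs_sum_le_sum_abs _ _
        _ ≤ ∑ i ∈ Finset.range m, (a * b) ^ i * (π * h m) := by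
            apply Finset.sum_le_sum
            intro i _
            rw [hF]
            simp only
            rw [abs_mul, abs_pow, abs_of_nonneg ha0.le]
            have hlip : |Real.cos ((b : ℝ) ^ i * π * (x + h m)) -
                Real.cos ((b : ℝ) ^ i * π * x)| ≤ (b : ℝ) ^ i * π * h m := by
              have h3 := myAbsCosSubCos ((b : ℝ) ^ i * π * (x + h m)) ((b : ℝ) ^ i * π * x)
              have heq : (b : ℝ) ^ i * π * (x + h m) - (b : ℝ) ^ i * π * x
                  = (b : ℝ) ^ i * π * h m := by ring
              rw [heq] at h3
              refine h3.trans_eq (abs_of_nonneg ?_)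
              have := (hhpos m).le
              positivity
            calc a ^ i * |Real.cos ((b : ℝ) ^ i * π * (x + h m)) -
                  Real.cos ((b : ℝ) ^ i * π * x)|
                ≤ a ^ i * ((b : ℝ) ^ i * π * h m) :=
                  mul_le_mul_of_nonneg_left hlip (pow_nonneg ha0.le i)
              _ = (a * b) ^ i * (π * h m) := by rw [mul_pow]; ring
        _ = (∑ i ∈ Finset.range m, (a * b) ^ i) * (π * h m) := by
            rw [Finset.sum_mul]
        _ ≤ (a * b) ^ m / (a * b - 1) * (π * h m) := by
            have hpm : (0 : ℝ) < h m := hhpos m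
            apply mul_le_mul_of_nonneg_right _ (by positivity)
            rw [geom_sum_eq (by linarith : a * b ≠ 1)]
            apply div_le_div_of_nonneg_right _ (by linarith)
            linarith [pow_pos (by linarith : (0:ℝ) < a * b) m]
        _ = π * h m * (a * b) ^ m / (a * b - 1) := by ring
    -- tail
    set g : ℕ → ℝ := fun k => a ^ k * (1 + Real.cos ((b : ℝ) ^ k * π * t)) with hg
    have hgsum : Summable g := by
      apply mySummable ha0.le ha1
      intro n
      rw [abs_le]
      constructor <;> nlinarith [Real.neg_one_le_cos ((b : ℝ) ^ n * π * t),
        Real.cos_le_one ((b : ℝ) ^ n * π * t)]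
    have hgnonneg : ∀ k, 0 ≤ g k := by
      intro k
      rw [hg]
      simp only
      have := Real.neg_one_le_cos ((b : ℝ) ^ k * π * t)
      have h4 : (0:ℝ) ≤ 1 + Real.cos ((b : ℝ) ^ k * π * t) := by linarith
      positivity
    have htail : ∀ k : ℕ, F (k + m) = -(-1 : ℝ) ^ α * a ^ m * g k := by
      intro k
      have hbodd : Odd (b ^ k) := hb.pow
      have hy : (b : ℝ) ^ m * (x + h m) = (α : ℝ) + 1 := by
        have h5 : B * (x + h m) = B * x + B * h m := by ring
        rw [← hB, h5, hBm, ht]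
        ring
      have e1 : (b : ℝ) ^ (k + m) * π * (x + h m) = ((b ^ k * (α + 1) : ℤ) : ℝ) * π + 0 := by
        push_cast
        rw [pow_add]
        calc (b : ℝ) ^ k * (b : ℝ) ^ m * π * (x + h m)
            = (b : ℝ) ^ k * ((b : ℝ) ^ m * (x + h m)) * π := by ring
          _ = (b : ℝ) ^ k * ((α : ℝ) + 1) * π + 0 := by rw [hy]; ring
      have c1 : Real.cos ((b : ℝ) ^ (k + m) * π * (x + h m)) = -(-1 : ℝ) ^ α := by
        rw [e1, myCosIntPiAdd, Real.cos_zero, mul_one]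
        have h6 : ((b ^ k : ℕ) : ℤ) * (α + 1) = (b ^ k * (α + 1) : ℤ) := by push_cast; ring
        rw [← h6, myNegOneZpow _ hbodd, zpow_add₀ (by norm_num : (-1:ℝ) ≠ 0), zpow_one]
        ring
      have e2 : (b : ℝ) ^ (k + m) * π * x = ((b ^ k * α : ℤ) : ℝ) * π + (b : ℝ) ^ k * π * t := by
        push_cast
        rw [pow_add, ht, hB]
        ring
      have c2 : Real.cos ((b : ℝ) ^ (k + m) * π * x)
          = (-1 : ℝ) ^ α * Real.cos ((b : ℝ) ^ k * π * t) := by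
        rw [e2, myCosIntPiAdd]
        congr 1
        have h7 : ((b ^ k : ℕ) : ℤ) * α = (b ^ k * α : ℤ) := by push_cast; ring
        rw [← h7, myNegOneZpow _ hbodd]
      rw [hF]
      simp only
      rw [c1, c2, hg]
      simp only
      rw [pow_add]
      ring
    have htailval : ∑' k, F (k + m) = -(-1 : ℝ) ^ α * a ^ m * ∑' k, g k := by
      rw [← tsum_mul_left]
      exact tsum_congr htail
    have hgge : 1 ≤ ∑' k, g k := by
      have h0 : (1 : ℝ) ≤ g 0 := by
        rw [hg]
        simp only [pow_zero, one_mul]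
        have hcn : 0 ≤ Real.cos (π * t) := by
          apply Real.cos_nonneg_of_neg_pi_div_two_le_of_le
          · have := (abs_le.1 htabs).1
            nlinarith
          · have := (abs_le.1 htabs).2
            nlinarith
        linarith
      exact h0.trans (Summable.le_tsum hgsum 0 (fun j _ => hgnonneg j))
    have htailge : a ^ m ≤ |∑' k, F (k + m)| := by
      rw [htailval, abs_mul, abs_mul, abs_neg]
      have h1 : |(-1 : ℝ) ^ α| = 1 := by
        rcases Int.even_or_odd α with he | ho
        · rw [he.neg_one_zpow, abs_one]
        · rw [ho.neg_one_zpow, abs_neg, abs_one]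
      rw [h1, one_mul, abs_of_nonneg (pow_nonneg ha0.le m),
        abs_of_nonneg (tsum_nonneg hgnonneg)]
      calc a ^ m = a ^ m * 1 := by ring
        _ ≤ a ^ m * ∑' k, g k :=
          mul_le_mul_of_nonneg_left hgge (pow_nonneg ha0.le m)
    -- combine
    have hWlow : a ^ m - π * h m * (a * b) ^ m / (a * b - 1) ≤ |W (x + h m) - W x| := by
      rw [hWdiff, ← hsplit]
      set A := ∑ i ∈ Finset.range m, F i with hA
      set T := ∑' i, F (i + m) with hT
      have h2 : |T| - |A| ≤ |A + T| := by
        have h3 := abs_add_le (A + T) (-A)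
        have h4 : A + T + -A = T := by ring
        rw [h4, abs_neg] at h3
        linarith
      linarith
    have hinv : (2/3 : ℝ) * (a*b)^m ≤ a^m / h m := by
      rw [le_div_iff₀ (hhpos m)]
      calc (2/3 : ℝ) * (a*b)^m * h m ≤ (2/3 : ℝ) * (a*b)^m * (3/2 / (b:ℝ)^m) := by
            have := pow_pos (by linarith : (0:ℝ) < a * b) m
            exact mul_le_mul_of_nonneg_left (hhle m) (by positivity)
        _ = a^m := by
            rw [mul_pow]
            field_simp
    calc C * (a*b)^m = (2/3 : ℝ)*(a*b)^m - π*(a*b)^m/(a*b-1) := by rw [hC]; ring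
      _ ≤ a^m / h m - π*(a*b)^m/(a*b-1) := by linarith
      _ = (a^m - π * h m * (a*b)^m/(a*b-1)) / h m := by
          have hne : h m ≠ 0 := (hhpos m).ne'
          field_simp
      _ ≤ |W (x + h m) - W x| / h m :=
          div_le_div_of_nonneg_right hWlow (hhpos m).le
      _ = |(W (x + h m) - W x) / h m| := by
          rw [abs_div, abs_of_pos (hhpos m)]
  -- now derive the contradiction
  obtain ⟨L, hL⟩ : ∃ L, HasDerivAt W L x := ⟨_, hdiff.hasDerivAt⟩
  rw [hasDerivAt_iff_tendsto_slope] at hL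
  have htend0 : Tendsto h atTop (𝓝 0) := by
    apply squeeze_zero (fun m => (hhpos m).le) hhle
    have h8 : Tendsto (fun m : ℕ => ((b:ℝ)⁻¹) ^ m) atTop (𝓝 0) :=
      tendsto_pow_atTop_nhds_zero_of_lt_one (by positivity)
        (by rw [inv_lt_one_iff₀]; right; exact hbR)
    have := h8.const_mul (3/2 : ℝ)
    simp only [mul_zero] at this
    convert this using 2 with m
    rw [div_eq_mul_inv, inv_pow]
  have hy : Tendsto (fun m => x + h m) atTop (𝓝[≠] x) := by
    rw [tendsto_nhdsWithin_iff]
    constructor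
    · have h10 : Tendsto (fun m : ℕ => x + h m) atTop (𝓝 (x + 0)) :=
        Tendsto.add tendsto_const_nhds htend0
      simpa using h10
    · filter_upwards with m
      have := hhpos m
      simp only [Set.mem_compl_iff, Set.mem_singleton_iff]
      intro hcon
      have : h m = 0 := by linarith [congrArg (· - x) hcon]
      linarith
  have hslope := hL.comp hy
  have hslope_eq : ∀ m : ℕ, slope W x (x + h m) = (W (x + h m) - W x) / h m := by
    intro m
    rw [slope_def_field]
    congr 1
    ring
  have hbound : ∀ᶠ m : ℕ in atTop, |(W (x + h m) - W x) / h m| < |L| + 1 := by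
    have h9 : Tendsto (fun m : ℕ => |slope W x (x + h m)|) atTop (𝓝 |L|) := hslope.abs
    have := h9.eventually_lt_const (by linarith [abs_nonneg L] : |L| < |L| + 1)
    filter_upwards [this] with m hm
    rw [← hslope_eq m]
    exact hm
  have hbig : ∀ᶠ m : ℕ in atTop, |L| + 1 < C * (a*b)^m :=
    ((tendsto_pow_atTop_atTop_of_one_lt hab1).const_mul_atTop hCpos).eventually_gt_atTop _
  obtain ⟨m, h1, h2⟩ := (hbound.and hbig).exists
  exact lt_irrefl _ (lt_of_le_of_lt (key m) (h1.trans h2))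
end
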